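/- Let β ∈ (0,1), 0 < R₁ ≤ R₂, θ∞ > 0, u∞ < 0, T > 0 and γ > 0. Let E : [0,T] × [0,∞) → ℝ be continuous and satisfy sup_{(t,x)} |E(t,x)| · (2R₂ + |u∞|)/θ∞ ≤ β R₁ / 2 − γ. Suppose f : [0,T] × [0,∞) × ℝ³ → ℝ is C¹, satisfies ∂_t f + ξ₁ ∂_x f + E ∂_{ξ₁} f = ((ξ₁ − u∞)/(2θ∞)) E f on (0,T) × (0,∞) × ℝ³, satisfies f(t,x,ξ) = 0 whenever ξ₁ ∉ [R₁/2, 2R₂], and satisfies sup_{t ∈ [0,T]} ∫₀^∞ ∫_{ℝ³} e^{βx} (1 + |ξ₁|)( |f(t,x,ξ)|² + |∇_{t,x,ξ} f(t,x,ξ)|² ) dξ dx < ∞. Then for every t ∈ [0,T], ∫₀^∞ ∫_{ℝ³} e^{βx} |f(t,x,ξ)|² dξ dx ≥ e^{γ t} ∫₀^∞ ∫_{ℝ³} e^{βx} |f(0,x,ξ)|² dξ dx. -/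

import Mathlib

open MeasureTheory Real Set Filter Topology


private lemma key0 (e m a d : ℝ) (he : 0 < e) (hm : 0 ≤ m) :
    e * (a^2 + d^2) ≤ e * (1+m) * (a^2 + d^2) := by
  nlinarith [mul_nonneg (mul_nonneg he.le hm) (by positivity : (0:ℝ) ≤ a^2 + d^2)]

lemma bnd1 (e m a d : ℝ) (he : 0 < e) (hm : 0 ≤ m) (hd : 0 ≤ d) :
    |e * a^2| ≤ e * (1+m) * (a^2 + d^2) := by
  rw [abs_of_nonneg (mul_nonneg he.le (sq_nonneg a))]
  refine le_trans ?_ (key0 e m a d he hm)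
  nlinarith [mul_nonneg he.le (sq_nonneg d)]

lemma bnd2 (e m a b d : ℝ) (he : 0 < e) (hm : 0 ≤ m) (hb : |b| ≤ d) :
    |e * (2*a*b)| ≤ e * (1+m) * (a^2 + d^2) := by
  rw [abs_mul, abs_of_pos he]
  refine le_trans ?_ (key0 e m a d he hm)
  have h1 : |2*a*b| ≤ a^2 + d^2 := by
    have h2 : |2*a*b| = 2 * |a| * |b| := by
      rw [abs_mul, abs_mul]; simp [abs_of_nonneg]
    nlinarith [sq_nonneg (|a| - d), abs_nonneg a, abs_nonneg b, sq_abs a]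
  exact mul_le_mul_of_nonneg_left h1 he.le

lemma bnd3 (e m a b d : ℝ) (he : 0 < e) (hb : |b| ≤ d) :
    |m * (e * (2*a*b))| ≤ e * (1+|m|) * (a^2 + d^2) := by
  rw [abs_mul]
  have h1 : |e * (2*a*b)| ≤ e * (a^2 + d^2) := by
    have := bnd2 e 0 a b d he le_rfl hb
    simpa using this
  have h2 : 0 ≤ |m| := abs_nonneg m
  have h3 : 0 ≤ |e * (2*a*b)| := abs_nonneg _
  have h4 : |m| * |e * (2*a*b)| ≤ |m| * (e * (a^2+d^2)) := mul_le_mul_of_nonneg_left h1 h2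
  have h5 : 0 ≤ e * (a^2 + d^2) := by positivity
  nlinarith
lemma bnd4 (e m a d : ℝ) (he : 0 < e) (hd : 0 ≤ d) :
    |m * (e * a^2)| ≤ e * (1+|m|) * (a^2 + d^2) := by
  rw [abs_mul, abs_of_nonneg (mul_nonneg he.le (sq_nonneg a))]
  have h2 : 0 ≤ |m| := abs_nonneg m
  have h5 : 0 ≤ e * a^2 := mul_nonneg he.le (sq_nonneg a)
  nlinarith [mul_nonneg he.le (sq_nonneg d), mul_nonneg (mul_nonneg h2 he.le) (sq_nonneg d)]

lemma bnd5 (e m a b d c K : ℝ) (he : 0 < e) (hm : 0 ≤ m) (hb : |b| ≤ d) (hc : |c| ≤ K) :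
    |c * (e * (2*a*b))| ≤ K * (e * (1+m) * (a^2 + d^2)) := by
  rw [abs_mul]
  have h1 := bnd2 e m a b d he hm hb
  have h2 : 0 ≤ |c| := abs_nonneg c
  have h3 : 0 ≤ |e * (2*a*b)| := abs_nonneg _
  nlinarith
lemma bnd6 (e m a d c K : ℝ) (he : 0 < e) (hm : 0 ≤ m) (hd : 0 ≤ d) (hc : |c| ≤ K) :
    |c * (e * a^2)| ≤ K * (e * (1+m) * (a^2 + d^2)) := by
  rw [abs_mul, abs_of_nonneg (mul_nonneg he.le (sq_nonneg a))]
  have h1 := bnd1 e m a d he hm hd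
  rw [abs_of_nonneg (mul_nonneg he.le (sq_nonneg a))] at h1
  have h2 : 0 ≤ |c| := abs_nonneg c
  have h5 : 0 ≤ e * a^2 := mul_nonneg he.le (sq_nonneg a)
  nlinarith



lemma aux_integral_Ioi_deriv {h h' : ℝ → ℝ} (hd : ∀ x, HasDerivAt h (h' x) x)
    (hpos : ∀ x, 0 ≤ h x) (hi : IntegrableOn h (Set.Ioi 0))
    (hi' : IntegrableOn h' (Set.Ioi 0)) (hc' : Continuous h') :
    ∫ x in Set.Ioi (0:ℝ), h' x = - h 0 := by
  set L : ℝ := h 0 + ∫ x in Set.Ioi (0:ℝ), h' x with hL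
  have hFTC : ∀ R : ℝ, h R = h 0 + ∫ x in (0:ℝ)..R, h' x := by
    intro R
    rw [intervalIntegral.integral_eq_sub_of_hasDerivAt (fun x _ => hd x)
        (hc'.intervalIntegrable _ _)]
    ring
  have htend : Tendsto h atTop (𝓝 L) := by
    have h1 := MeasureTheory.intervalIntegral_tendsto_integral_Ioi 0 hi' tendsto_id
    have h2 : Tendsto (fun R => h 0 + ∫ x in (0:ℝ)..R, h' x) atTop (𝓝 L) :=
      tendsto_const_nhds.add h1
    exact h2.congr (fun R => (hFTC R).symm)
  have hLnonneg : 0 ≤ L := ge_of_tendsto htend (Eventually.of_forall hpos)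
  have hL0 : L = 0 := by
    by_contra hne
    have hLpos : 0 < L := lt_of_le_of_ne hLnonneg (Ne.symm hne)
    have hev : ∀ᶠ x in atTop, L / 2 ≤ h x :=
      htend.eventually (eventually_ge_nhds (by linarith))
    obtain ⟨M, hM⟩ := hev.exists_forall_of_atTop
    set M' : ℝ := max M 1 with hM'
    have hsub : Set.Ioi M' ⊆ Set.Ioi (0:ℝ) := fun x hx => by
      simp only [Set.mem_Ioi] at *
      have : (1:ℝ) ≤ M' := le_max_right _ _
      linarith
    have hIM : IntegrableOn h (Set.Ioi M') := hi.mono_set hsub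
    have hconst : IntegrableOn (fun _ : ℝ => L / 2) (Set.Ioi M') := by
      refine Integrable.mono' hIM aestronglyMeasurable_const ?_
      filter_upwards [ae_restrict_mem measurableSet_Ioi] with x hx
      rw [Real.norm_eq_abs, abs_of_pos (by linarith)]
      exact hM x (le_of_lt (lt_of_le_of_lt (le_max_left M 1) hx))
    rw [IntegrableOn, integrable_const_iff] at hconst
    rcases hconst with hc | hc
    · exact hne (by linarith)
    · have hc := hc.measure_univ_lt_top
      rw [Measure.restrict_apply_univ, Real.volume_Ioi] at hc
      exact (lt_irrefl _ hc)
  rw [hL] at hL0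
  linarith

lemma aux_integral_deriv_zero {g g' : ℝ → ℝ} (hd : ∀ x, HasDerivAt g (g' x) x)
    (hc' : Continuous g') (a b : ℝ)
    (h0 : ∀ x, x < a ∨ b < x → g x = 0) (h0' : ∀ x, x < a ∨ b < x → g' x = 0) :
    ∫ x, g' x = 0 := by
  have hsupp : Function.support g' ⊆ Set.Ioc (a - 1) (max a b + 1) := by
    intro x hx
    by_contra hmem
    simp only [Set.mem_Ioc, not_and_or, not_lt, not_le] at hmem
    apply hx
    rcases hmem with hle | hgt
    · exact h0' x (Or.inl (by linarith))
    · exact h0' x (Or.inr (by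
        have : b ≤ max a b := le_max_right a b
        linarith))
  rw [← intervalIntegral.integral_eq_integral_of_support_subset hsupp]
  have hab : a - 1 ≤ max a b + 1 := by
    have : a ≤ max a b := le_max_left a b
    linarith
  rw [intervalIntegral.integral_eq_sub_of_hasDerivAt (fun x _ => hd x)
      (hc'.intervalIntegrable _ _)]
  rw [h0 (max a b + 1) (Or.inr (by have : b ≤ max a b := le_max_right a b; linarith)),
    h0 (a - 1) (Or.inl (by linarith))]
  ring

lemma aux_gronwall {γ T : ℝ} (hγ : 0 < γ) (hT : 0 < T) {I : ℝ → ℝ}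
    (hIc : ContinuousOn I (Set.Icc 0 T))
    (hIineq : ∀ t ∈ Set.Icc 0 T, I 0 + γ * ∫ τ in (0:ℝ)..t, I τ ≤ I t) :
    ∀ t ∈ Set.Icc 0 T, Real.exp (γ * t) * I 0 ≤ I t := by
  set c : ℝ → ℝ := fun s => max 0 (min s T) with hc
  have hcc : Continuous c := continuous_const.max (continuous_id.min continuous_const)
  have hcmem : ∀ s, c s ∈ Set.Icc 0 T := fun s =>
    ⟨le_max_left _ _, max_le (le_of_lt hT) (min_le_right _ _)⟩
  have hceq : ∀ s ∈ Set.Icc 0 T, c s = s := fun s hs => by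
    simp only [hc]
    rw [min_eq_left hs.2, max_eq_right hs.1]
  set Ic : ℝ → ℝ := fun s => I (c s) with hIcdef
  have hIcc : Continuous Ic := hIc.comp_continuous hcc hcmem
  set P : ℝ → ℝ := fun s => ∫ τ in (0:ℝ)..s, Ic τ with hP
  have hPd : ∀ s, HasDerivAt P (Ic s) s := fun s =>
    (hIcc.integral_hasStrictDerivAt 0 s).hasDerivAt
  have hPI : ∀ s ∈ Set.Icc 0 T, P s = ∫ τ in (0:ℝ)..s, I τ := by
    intro s hs
    refine intervalIntegral.integral_congr (fun τ hτ => ?_)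
    rw [Set.uIcc_of_le hs.1] at hτ
    exact congrArg I (hceq τ ⟨hτ.1, le_trans hτ.2 hs.2⟩)
  set Ψ : ℝ → ℝ := fun s => Real.exp (-γ * s) * (I 0 + γ * P s) with hΨ
  have hΨd : ∀ s, HasDerivAt Ψ
      (Real.exp (-γ * s) * (-γ) * (I 0 + γ * P s) + Real.exp (-γ * s) * (γ * Ic s)) s := by
    intro s
    have h1 : HasDerivAt (fun s => Real.exp (-γ * s)) (Real.exp (-γ * s) * (-γ)) s := by
      simpa using ((hasDerivAt_id s).const_mul (-γ)).exp
    have h2 : HasDerivAt (fun s => I 0 + γ * P s) (γ * Ic s) s := by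
      exact ((hPd s).const_mul γ).const_add (I 0)
    exact h1.mul h2
  have hΨmono : MonotoneOn Ψ (Set.Icc 0 T) := by
    refine monotoneOn_of_deriv_nonneg (convex_Icc 0 T)
      (fun s _ => (hΨd s).continuousAt.continuousWithinAt)
      (fun s _ => ((hΨd s).differentiableAt).differentiableWithinAt) ?_
    intro s hs
    rw [interior_Icc] at hs
    rw [(hΨd s).deriv]
    have hsIcc : s ∈ Set.Icc 0 T := ⟨le_of_lt hs.1, le_of_lt hs.2⟩
    have h3 : I 0 + γ * P s ≤ Ic s := by
      rw [hPI s hsIcc, hIcdef]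
      simp only
      rw [hceq s hsIcc]
      exact hIineq s hsIcc
    have h4 : (0:ℝ) < Real.exp (-γ * s) := Real.exp_pos _
    have h5 := mul_le_mul_of_nonneg_left h3 (le_of_lt (mul_pos h4 hγ))
    nlinarith [h5]
  intro t ht
  have h5 : Ψ 0 ≤ Ψ t := hΨmono ⟨le_refl 0, le_of_lt hT⟩ ht ht.1
  have h6 : Ψ 0 = I 0 := by
    simp only [hΨ, hP, mul_zero, neg_zero, Real.exp_zero, intervalIntegral.integral_same,
      one_mul, add_zero]
  have h7 : I 0 + γ * P t ≤ I t := by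
    rw [hPI t ht]
    exact hIineq t ht
  have h8 : Ψ t ≤ Real.exp (-γ * t) * I t := by
    refine mul_le_mul_of_nonneg_left h7 (le_of_lt (Real.exp_pos _))
  have h9 : I 0 ≤ Real.exp (-γ * t) * I t := by
    rw [← h6]; exact le_trans h5 h8
  calc Real.exp (γ * t) * I 0 ≤ Real.exp (γ * t) * (Real.exp (-γ * t) * I t) :=
        mul_le_mul_of_nonneg_left h9 (le_of_lt (Real.exp_pos _))
    _ = I t := by rw [← mul_assoc, ← Real.exp_add]; ring_nf; simp [Real.exp_zero]


set_option maxHeartbeats 2000000 in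
/-- exponential growth of the weighted `L²` norm for perturbations
supported in incoming velocities `ξ₁ ∈ [R₁/2, 2R₂]`: if the field `E` is small in the
sense `sup|E| (2R₂+|u∞|)/θ∞ ≤ βR₁/2 − γ`, then
`∫∫ e^{βx}|f(t)|² ≥ e^{γt} ∫∫ e^{βx}|f(0)|²`. -/
theorem instability_growth_estimate
    (β R₁ R₂ θ u T γ : ℝ) (hβ : 0 < β) (hβ1 : β < 1)
    (hR1 : 0 < R₁) (hR12 : R₁ ≤ R₂) (hθ : 0 < θ) (hu : u < 0) (hT : 0 < T) (hγ : 0 < γ)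
    (E : ℝ → ℝ → ℝ) (hEc : Continuous (fun p : ℝ × ℝ => E p.1 p.2))
    (hEb : ∀ t ∈ Set.Icc 0 T, ∀ x ≥ (0:ℝ),
      |E t x| * (2*R₂ + |u|) / θ ≤ β * R₁ / 2 - γ)
    (f : ℝ → ℝ → ℝ × ℝ × ℝ → ℝ)
    (hf : ContDiff ℝ 1 (fun p : ℝ × ℝ × (ℝ × ℝ × ℝ) => f p.1 p.2.1 p.2.2))
    (heq : ∀ t ∈ Set.Ioo 0 T, ∀ x > (0:ℝ), ∀ ξ : ℝ × ℝ × ℝ,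
      deriv (fun s => f s x ξ) t + ξ.1 * deriv (fun y => f t y ξ) x
        + E t x * deriv (fun v => f t x (v, ξ.2)) ξ.1
        = ((ξ.1 - u) / (2*θ)) * E t x * f t x ξ)
    (hsupp : ∀ t x, ∀ ξ : ℝ × ℝ × ℝ, ξ.1 < R₁/2 ∨ 2*R₂ < ξ.1 → f t x ξ = 0)
    (hsup : ∃ B : ℝ, ∀ t ∈ Set.Icc 0 T,
      (∫⁻ x in Set.Ioi 0, ∫⁻ ξ : ℝ × ℝ × ℝ,
        ENNReal.ofReal (Real.exp (β*x) * (1 + |ξ.1|) * ((f t x ξ)^2 +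
          ‖fderiv ℝ (fun p : ℝ × ℝ × (ℝ × ℝ × ℝ) => f p.1 p.2.1 p.2.2) (t, x, ξ)‖^2)))
        ≤ ENNReal.ofReal B) :
    ∀ t ∈ Set.Icc 0 T,
      Real.exp (γ * t) * ∫ x in Set.Ioi (0:ℝ), ∫ ξ : ℝ × ℝ × ℝ,
          Real.exp (β*x) * (f 0 x ξ)^2
        ≤ ∫ x in Set.Ioi (0:ℝ), ∫ ξ : ℝ × ℝ × ℝ, Real.exp (β*x) * (f t x ξ)^2 := by
  obtain ⟨B, hB⟩ := hsup
  set F : ℝ × ℝ × (ℝ × ℝ × ℝ) → ℝ := fun p => f p.1 p.2.1 p.2.2 with hF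
  have hFc : Continuous F := hf.continuous
  have hFd : Differentiable ℝ F := hf.differentiable one_ne_zero
  have hDFc : Continuous (fun p => fderiv ℝ F p) := hf.continuous_fderiv one_ne_zero
  -- directions
  set et : ℝ × ℝ × (ℝ × ℝ × ℝ) := (1, 0, 0, 0, 0) with het
  set ex : ℝ × ℝ × (ℝ × ℝ × ℝ) := (0, 1, 0, 0, 0) with hex
  set ev : ℝ × ℝ × (ℝ × ℝ × ℝ) := (0, 0, 1, 0, 0) with hev
  set dt : ℝ → ℝ → ℝ × ℝ × ℝ → ℝ := fun t x ξ => fderiv ℝ F (t, x, ξ) et with hdt_def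
  set dx : ℝ → ℝ → ℝ × ℝ × ℝ → ℝ := fun t x ξ => fderiv ℝ F (t, x, ξ) ex with hdx_def
  set dv : ℝ → ℝ → ℝ × ℝ × ℝ → ℝ := fun t x ξ => fderiv ℝ F (t, x, ξ) ev with hdv_def
  have hdt : ∀ (t x : ℝ) (ξ : ℝ × ℝ × ℝ), HasDerivAt (fun s => f s x ξ) (dt t x ξ) t := by
    intro t x ξ
    exact (hFd (t, x, ξ)).hasFDerivAt.comp_hasDerivAt t
      ((hasDerivAt_id t).prodMk (hasDerivAt_const t (x, ξ)))
  have hdx : ∀ (t x : ℝ) (ξ : ℝ × ℝ × ℝ), HasDerivAt (fun y => f t y ξ) (dx t x ξ) x := by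
    intro t x ξ
    exact (hFd (t, x, ξ)).hasFDerivAt.comp_hasDerivAt x
      ((hasDerivAt_const x t).prodMk ((hasDerivAt_id x).prodMk (hasDerivAt_const x ξ)))
  have hdv : ∀ (t x : ℝ) (ξ : ℝ × ℝ × ℝ), HasDerivAt (fun v => f t x (v, ξ.2)) (dv t x ξ) ξ.1 := by
    intro t x ξ
    exact (hFd (t, x, ξ)).hasFDerivAt.comp_hasDerivAt ξ.1
      ((hasDerivAt_const ξ.1 t).prodMk ((hasDerivAt_const ξ.1 x).prodMk
        ((hasDerivAt_id ξ.1).prodMk (hasDerivAt_const ξ.1 ξ.2))))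
  have hnet : ‖et‖ = 1 := by simp [het, Prod.norm_def]
  have hnex : ‖ex‖ = 1 := by simp [hex, Prod.norm_def]
  have hnev : ‖ev‖ = 1 := by simp [hev, Prod.norm_def]
  have hdb : ∀ (e : ℝ × ℝ × (ℝ × ℝ × ℝ)), ‖e‖ = 1 → ∀ (t x : ℝ) (ξ : ℝ × ℝ × ℝ),
      |fderiv ℝ F (t, x, ξ) e| ≤ ‖fderiv ℝ F (t, x, ξ)‖ := by
    intro e he t x ξ
    have h := (fderiv ℝ F (t, x, ξ)).le_opNorm e
    rw [he, mul_one] at h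
    simpa [Real.norm_eq_abs] using h
  -- continuity of directional derivatives (jointly in p = (t,x,ξ))
  have hdc : ∀ (e : ℝ × ℝ × (ℝ × ℝ × ℝ)),
      Continuous (fun p : ℝ × ℝ × (ℝ × ℝ × ℝ) => fderiv ℝ F p e) :=
    fun e => hDFc.clm_apply continuous_const
  -- PDE in directional-derivative form
  have heq' : ∀ τ ∈ Set.Ioo (0:ℝ) T, ∀ x > (0:ℝ), ∀ ξ : ℝ × ℝ × ℝ,
      dt τ x ξ = -(ξ.1 * dx τ x ξ) - E τ x * dv τ x ξ
        + ((ξ.1 - u) / (2*θ)) * E τ x * f τ x ξ := by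
    intro τ hτ x hx ξ
    have h := heq τ hτ x hx ξ
    rw [(hdt τ x ξ).deriv, (hdx τ x ξ).deriv, (hdv τ x ξ).deriv] at h
    linarith
  -- measure and dominating function
  set μ : Measure (ℝ × (ℝ × ℝ × ℝ)) := (volume.restrict (Set.Ioi 0)).prod volume with hμ
  set Dn : ℝ → ℝ × (ℝ × ℝ × ℝ) → ℝ := fun t p => ‖fderiv ℝ F (t, p.1, p.2)‖ with hDn
  set G : ℝ → ℝ × (ℝ × ℝ × ℝ) → ℝ :=
    fun t p => Real.exp (β * p.1) * (1 + |p.2.1|) * ((f t p.1 p.2)^2 + (Dn t p)^2) with hGdef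
  have hGpos : ∀ t p, 0 ≤ G t p := by
    intro t p
    rw [hGdef]
    positivity
  have hfc2 : ∀ t : ℝ, Continuous (fun p : ℝ × (ℝ × ℝ × ℝ) => f t p.1 p.2) := by
    intro t
    exact hFc.comp (continuous_const.prodMk continuous_id)
  have hDnc : ∀ t : ℝ, Continuous (Dn t) := by
    intro t
    exact (hDFc.comp (continuous_const.prodMk continuous_id)).norm
  have hGc : ∀ t : ℝ, Continuous (G t) := by
    intro t
    refine ((continuous_const.mul continuous_fst).rexp.mul
      (continuous_const.add (continuous_fst.comp continuous_snd).abs)).mul ?_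
    exact ((hfc2 t).pow 2).add ((hDnc t).pow 2)
  have hG_lint : ∀ t ∈ Set.Icc (0:ℝ) T, ∫⁻ p, ENNReal.ofReal (G t p) ∂μ ≤ ENNReal.ofReal B := by
    intro t ht
    rw [hμ, MeasureTheory.lintegral_prod _ ((hGc t).measurable.ennreal_ofReal.aemeasurable)]
    exact hB t ht
  have hmaster : ∀ t ∈ Set.Icc (0:ℝ) T, ∀ (w : ℝ × (ℝ × ℝ × ℝ) → ℝ) (C : ℝ),
      AEStronglyMeasurable w μ → 0 ≤ C → (∀ᵐ p ∂μ, |w p| ≤ C * G t p) → Integrable w μ := by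
    intro t ht w C hwm hC hdom
    refine ⟨hwm, ?_⟩
    rw [hasFiniteIntegral_iff_norm]
    calc ∫⁻ p, ENNReal.ofReal ‖w p‖ ∂μ ≤ ∫⁻ p, ENNReal.ofReal (C * G t p) ∂μ := by
          refine lintegral_mono_ae (hdom.mono fun p hp => ENNReal.ofReal_le_ofReal ?_)
          rwa [Real.norm_eq_abs]
      _ = ENNReal.ofReal C * ∫⁻ p, ENNReal.ofReal (G t p) ∂μ := by
          rw [← lintegral_const_mul' (ENNReal.ofReal C) _ ENNReal.ofReal_ne_top]
          refine lintegral_congr fun p => ?_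
          rw [← ENNReal.ofReal_mul hC]
      _ ≤ ENNReal.ofReal C * ENNReal.ofReal B := mul_le_mul_right (hG_lint t ht) _
      _ < ⊤ := ENNReal.mul_lt_top ENNReal.ofReal_lt_top ENNReal.ofReal_lt_top
  have hxpos : ∀ᵐ p ∂μ, 0 < p.1 := by
    rw [ae_iff]
    have hset : {p : ℝ × (ℝ × ℝ × ℝ) | ¬ 0 < p.1} = (Set.Iic 0) ×ˢ Set.univ := by
      ext p; simp [not_lt]
    rw [hμ, hset, Measure.prod_prod, Measure.restrict_apply measurableSet_Iic,
      Set.Iic_inter_Ioi, Set.Ioc_self, measure_empty, zero_mul]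
  -- uniform bound on E
  set CE : ℝ := (β * R₁ / 2 - γ) * θ / (2 * R₂ + |u|) with hCE
  have hRu : (0:ℝ) < 2 * R₂ + |u| := by
    have := abs_nonneg u; linarith
  have hCE0 : 0 ≤ β * R₁ / 2 - γ := by
    have h := hEb 0 ⟨le_refl 0, hT.le⟩ 0 (le_refl 0)
    have h2 : 0 ≤ |E 0 0| * (2 * R₂ + |u|) / θ := by positivity
    linarith
  have hEbound : ∀ t ∈ Set.Icc (0:ℝ) T, ∀ x : ℝ, 0 ≤ x → |E t x| ≤ CE := by
    intro t ht x hx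
    have h := hEb t ht x hx
    rw [div_le_iff₀ hθ] at h
    rw [hCE, le_div_iff₀ hRu]
    linarith
  have hCEpos : 0 ≤ CE := by
    rw [hCE]; positivity
  -- band facts
  have hband : ∀ (s x : ℝ) (ξ : ℝ × ℝ × ℝ), f s x ξ ≠ 0 → R₁/2 ≤ ξ.1 ∧ ξ.1 ≤ 2*R₂ := by
    intro s x ξ h
    constructor
    · by_contra h'
      exact h (hsupp s x ξ (Or.inl (by linarith)))
    · by_contra h'
      exact h (hsupp s x ξ (Or.inr (by linarith)))
  -- integrand functions
  set w0 : ℝ → ℝ × (ℝ × ℝ × ℝ) → ℝ :=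
    fun s p => Real.exp (β * p.1) * (f s p.1 p.2)^2 with hw0def
  set wt : ℝ → ℝ × (ℝ × ℝ × ℝ) → ℝ :=
    fun s p => Real.exp (β * p.1) * (2 * f s p.1 p.2 * dt s p.1 p.2) with hwtdef
  set wax : ℝ → ℝ × (ℝ × ℝ × ℝ) → ℝ :=
    fun s p => Real.exp (β * p.1) * (2 * f s p.1 p.2 * dx s p.1 p.2) with hwaxdef
  set wa : ℝ → ℝ × (ℝ × ℝ × ℝ) → ℝ :=
    fun s p => p.2.1 * (Real.exp (β * p.1) * (2 * f s p.1 p.2 * dx s p.1 p.2)) with hwadef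
  set wb : ℝ → ℝ × (ℝ × ℝ × ℝ) → ℝ :=
    fun s p => E s p.1 * (Real.exp (β * p.1) * (2 * f s p.1 p.2 * dv s p.1 p.2)) with hwbdef
  set wc : ℝ → ℝ × (ℝ × ℝ × ℝ) → ℝ :=
    fun s p => ((p.2.1 - u) / θ * E s p.1) * (Real.exp (β * p.1) * (f s p.1 p.2)^2) with hwcdef
  set wξ : ℝ → ℝ × (ℝ × ℝ × ℝ) → ℝ :=
    fun s p => p.2.1 * (Real.exp (β * p.1) * (f s p.1 p.2)^2) with hwξdef
  -- continuity
  have hexc : Continuous (fun p : ℝ × (ℝ × ℝ × ℝ) => Real.exp (β * p.1)) :=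
    (continuous_const.mul continuous_fst).rexp
  have hξ1c : Continuous (fun p : ℝ × (ℝ × ℝ × ℝ) => p.2.1) :=
    continuous_fst.comp continuous_snd
  have hdc2 : ∀ (e : ℝ × ℝ × (ℝ × ℝ × ℝ)) (s : ℝ),
      Continuous (fun p : ℝ × (ℝ × ℝ × ℝ) => fderiv ℝ F (s, p.1, p.2) e) := by
    intro e s
    exact (hdc e).comp (continuous_const.prodMk continuous_id)
  have hE2c : ∀ s : ℝ, Continuous (fun x : ℝ => E s x) := by
    intro s
    exact hEc.comp (continuous_const.prodMk continuous_id)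
  have hw0c : ∀ s, Continuous (w0 s) := fun s => hexc.mul ((hfc2 s).pow 2)
  have hwtc : ∀ s, Continuous (wt s) :=
    fun s => hexc.mul ((continuous_const.mul (hfc2 s)).mul (hdc2 et s))
  have hwaxc : ∀ s, Continuous (wax s) :=
    fun s => hexc.mul ((continuous_const.mul (hfc2 s)).mul (hdc2 ex s))
  have hwac : ∀ s, Continuous (wa s) := fun s => hξ1c.mul (hwaxc s)
  have hwbc : ∀ s, Continuous (wb s) :=
    fun s => ((hE2c s).comp continuous_fst).mul
      (hexc.mul ((continuous_const.mul (hfc2 s)).mul (hdc2 ev s)))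
  have hwcc : ∀ s, Continuous (wc s) :=
    fun s => (((hξ1c.sub continuous_const).div_const θ).mul
      ((hE2c s).comp continuous_fst)).mul (hexc.mul ((hfc2 s).pow 2))
  have hwξc : ∀ s, Continuous (wξ s) := fun s => hξ1c.mul (hw0c s)
  -- integrability
  have hw0i : ∀ s ∈ Set.Icc (0:ℝ) T, Integrable (w0 s) μ := by
    intro s hs
    refine hmaster s hs _ 1 (hw0c s).aestronglyMeasurable zero_le_one
      (Eventually.of_forall fun p => ?_)
    rw [one_mul]
    exact bnd1 _ _ _ _ (Real.exp_pos _) (abs_nonneg _) (norm_nonneg _)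
  have hwti : ∀ s ∈ Set.Icc (0:ℝ) T, Integrable (wt s) μ := by
    intro s hs
    refine hmaster s hs _ 1 (hwtc s).aestronglyMeasurable zero_le_one
      (Eventually.of_forall fun p => ?_)
    rw [one_mul]
    exact bnd2 _ _ _ _ _ (Real.exp_pos _) (abs_nonneg _) (hdb et hnet s p.1 p.2)
  have hwaxi : ∀ s ∈ Set.Icc (0:ℝ) T, Integrable (wax s) μ := by
    intro s hs
    refine hmaster s hs _ 1 (hwaxc s).aestronglyMeasurable zero_le_one
      (Eventually.of_forall fun p => ?_)
    rw [one_mul]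
    exact bnd2 _ _ _ _ _ (Real.exp_pos _) (abs_nonneg _) (hdb ex hnex s p.1 p.2)
  have hwai : ∀ s ∈ Set.Icc (0:ℝ) T, Integrable (wa s) μ := by
    intro s hs
    refine hmaster s hs _ 1 (hwac s).aestronglyMeasurable zero_le_one
      (Eventually.of_forall fun p => ?_)
    rw [one_mul]
    exact bnd3 _ _ _ _ _ (Real.exp_pos _) (hdb ex hnex s p.1 p.2)
  have hwξi : ∀ s ∈ Set.Icc (0:ℝ) T, Integrable (wξ s) μ := by
    intro s hs
    refine hmaster s hs _ 1 (hwξc s).aestronglyMeasurable zero_le_one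
      (Eventually.of_forall fun p => ?_)
    rw [one_mul]
    exact bnd4 _ _ _ _ (Real.exp_pos _) (norm_nonneg _)
  have hwbi : ∀ s ∈ Set.Icc (0:ℝ) T, Integrable (wb s) μ := by
    intro s hs
    refine hmaster s hs _ CE (hwbc s).aestronglyMeasurable hCEpos ?_
    filter_upwards [hxpos] with p hp
    exact bnd5 _ _ _ _ _ _ _ (Real.exp_pos _) (abs_nonneg _) (hdb ev hnev s p.1 p.2)
      (hEbound s hs p.1 hp.le)
  have hwci : ∀ s ∈ Set.Icc (0:ℝ) T, Integrable (wc s) μ := by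
    intro s hs
    refine hmaster s hs _ (CE * ((2*R₂ + |u|)/θ)) (hwcc s).aestronglyMeasurable
      (by positivity) ?_
    filter_upwards [hxpos] with p hp
    by_cases hf0 : f s p.1 p.2 = 0
    · have : wc s p = 0 := by rw [hwcdef]; simp [hf0]
      rw [this, abs_zero]
      have := hGpos s p
      positivity
    · obtain ⟨hb1, hb2⟩ := hband s p.1 p.2 hf0
      refine bnd6 _ _ _ _ _ _ (Real.exp_pos _) (abs_nonneg _) (norm_nonneg _) ?_
      rw [abs_mul, abs_div, abs_of_pos hθ]
      have h1 : |p.2.1 - u| ≤ 2*R₂ + |u| := by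
        rw [abs_of_pos (by linarith : (0:ℝ) < p.2.1 - u)]
        have : |u| = -u := abs_of_neg hu
        linarith
      have h2 : |E s p.1| ≤ CE := hEbound s hs p.1 hp.le
      have h3 : |p.2.1 - u| / θ ≤ (2*R₂ + |u|)/θ := (div_le_div_iff_of_pos_right hθ).mpr h1
      calc |p.2.1 - u| / θ * |E s p.1| ≤ (2*R₂+|u|)/θ * CE :=
            mul_le_mul h3 h2 (abs_nonneg _) (by positivity)
        _ = CE * ((2*R₂+|u|)/θ) := mul_comm _ _
  -- THE SLICE INEQUALITY
  have hslice : ∀ τ ∈ Set.Ioo (0:ℝ) T, γ * (∫ p, w0 τ p ∂μ) ≤ ∫ p, wt τ p ∂μ := by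
    intro τ hτ
    have hτI : τ ∈ Set.Icc (0:ℝ) T := ⟨hτ.1.le, hτ.2.le⟩
    have h0i := hw0i τ hτI
    have hti := hwti τ hτI
    have hai := hwai τ hτI
    have haxi := hwaxi τ hτI
    have hbi := hwbi τ hτI
    have hci := hwci τ hτI
    have hξi := hwξi τ hτI
    have hae : ∀ᵐ p ∂μ, wt τ p = -(wa τ p) - wb τ p + wc τ p := by
      filter_upwards [hxpos] with p hp
      have h := heq' τ hτ p.1 hp p.2
      simp only [hwtdef, hwadef, hwbdef, hwcdef]
      rw [h]
      ring
    have hsplit : ∫ p, wt τ p ∂μ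
        = -(∫ p, wa τ p ∂μ) - (∫ p, wb τ p ∂μ) + ∫ p, wc τ p ∂μ := by
      have hL1 : Integrable (fun p : ℝ × (ℝ × ℝ × ℝ) => -wa τ p - wb τ p) μ := hai.neg.sub hbi
      have hL2 : Integrable (fun p : ℝ × (ℝ × ℝ × ℝ) => -wa τ p) μ := hai.neg
      rw [integral_congr_ae hae, integral_add hL1 hci, integral_sub hL2 hbi, integral_neg]
    have hIb : ∫ p, wb τ p ∂μ = 0 := by
      rw [hμ, MeasureTheory.integral_prod _ hbi]
      have hs : ∀ᵐ x ∂(volume.restrict (Set.Ioi (0:ℝ))),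
          Integrable (fun ξ : ℝ × ℝ × ℝ => wb τ (x, ξ)) volume := hbi.prod_right_ae
      have hz : ∀ᵐ x ∂(volume.restrict (Set.Ioi (0:ℝ))),
          (∫ ξ : ℝ × ℝ × ℝ, wb τ (x, ξ)) = 0 := by
        filter_upwards [hs] with x hx
        have hre : (fun ξ : ℝ × ℝ × ℝ => wb τ (x, ξ))
            = fun ξ => (E τ x * Real.exp (β * x)) * (2 * f τ x ξ * dv τ x ξ) := by
          funext ξ
          simp only [hwbdef]
          ring
        rw [hre] at hx ⊢
        rw [MeasureTheory.integral_const_mul]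
        rcases eq_or_ne (E τ x * Real.exp (β * x)) 0 with hc0 | hc0
        · rw [hc0, zero_mul]
        · have hx2 : Integrable (fun ξ : ℝ × ℝ × ℝ => 2 * f τ x ξ * dv τ x ξ) volume := by
            have h5 := hx.const_mul (E τ x * Real.exp (β * x))⁻¹
            simp only [← mul_assoc, inv_mul_cancel₀ hc0, one_mul] at h5
            exact h5
          have hinner : ∀ y : ℝ × ℝ, (∫ v : ℝ, 2 * f τ x (v, y) * dv τ x (v, y)) = 0 := by
            intro y
            refine aux_integral_deriv_zero (g := fun v => (f τ x (v, y))^2)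
              (g' := fun v => 2 * f τ x (v, y) * dv τ x (v, y)) ?_ ?_ (R₁/2) (2*R₂) ?_ ?_
            · intro v
              simpa using (hdv τ x (v, y)).fun_pow 2
            · have hm : Continuous (fun v : ℝ => ((τ, x, (v, y)) : ℝ × ℝ × (ℝ × ℝ × ℝ))) :=
                continuous_const.prodMk (continuous_const.prodMk
                  (continuous_id.prodMk continuous_const))
              exact (continuous_const.mul (hFc.comp hm)).mul ((hdc ev).comp hm)
            · intro v hv
              show f τ x (v, y) ^ 2 = 0
              rw [hsupp τ x (v, y) hv]
              ring
            · intro v hv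
              show 2 * f τ x (v, y) * dv τ x (v, y) = 0
              rw [hsupp τ x (v, y) hv]
              ring
          rw [Measure.volume_eq_prod] at hx2
          rw [Measure.volume_eq_prod, MeasureTheory.integral_prod_symm _ hx2]
          simp only [hinner, integral_zero, mul_zero]
      rw [MeasureTheory.integral_congr_ae hz, integral_zero]
    have hIa : ∫ p, wa τ p ∂μ ≤ -(β * (R₁/2) * ∫ p, w0 τ p ∂μ) := by
      have hswap : ∫ p, wa τ p ∂μ
          = ∫ ξ : ℝ × ℝ × ℝ, (∫ x in Set.Ioi (0:ℝ), wa τ (x, ξ)) := by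
        rw [hμ, MeasureTheory.integral_prod_symm _ hai]
      have hswapξ : ∫ p, wξ τ p ∂μ
          = ∫ ξ : ℝ × ℝ × ℝ, (∫ x in Set.Ioi (0:ℝ), wξ τ (x, ξ)) := by
        rw [hμ, MeasureTheory.integral_prod_symm _ hξi]
      have haeξ : ∀ᵐ ξ : ℝ × ℝ × ℝ, (∫ x in Set.Ioi (0:ℝ), wa τ (x, ξ))
          ≤ -(β * ∫ x in Set.Ioi (0:ℝ), wξ τ (x, ξ)) := by
        filter_upwards [h0i.prod_left_ae, haxi.prod_left_ae] with ξ h1 h2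
        have hIBP : ∫ x in Set.Ioi (0:ℝ), wax τ (x, ξ)
            = -((f τ 0 ξ)^2) - β * ∫ x in Set.Ioi (0:ℝ), w0 τ (x, ξ) := by
          have hder : ∀ x : ℝ, HasDerivAt (fun x => Real.exp (β * x) * (f τ x ξ)^2)
              (β * w0 τ (x, ξ) + wax τ (x, ξ)) x := by
            intro x
            have he : HasDerivAt (fun x : ℝ => Real.exp (β * x)) (Real.exp (β * x) * β) x := by
              simpa using ((hasDerivAt_id x).const_mul β).exp
            have hf2 : HasDerivAt (fun x => (f τ x ξ)^2) (2 * f τ x ξ * dx τ x ξ) x := by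
              simpa using (hdx τ x ξ).fun_pow 2
            have hmul := he.fun_mul hf2
            simp only [hw0def, hwaxdef]
            exact hmul.congr_deriv (by ring)
          have hcont : Continuous (fun x => β * w0 τ (x, ξ) + wax τ (x, ξ)) := by
            refine ((continuous_const.mul ((hw0c τ).comp ?_)).add ((hwaxc τ).comp ?_)) <;>
              exact continuous_id.prodMk continuous_const
          have hBB := aux_integral_Ioi_deriv (h := fun x => Real.exp (β * x) * (f τ x ξ)^2)
            (h' := fun x => β * w0 τ (x, ξ) + wax τ (x, ξ)) hder
            (fun x => by positivity) h1 ((h1.const_mul β).add h2) hcont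
          rw [integral_add (h1.const_mul β) h2, MeasureTheory.integral_const_mul] at hBB
          simp only [mul_zero, Real.exp_zero, one_mul] at hBB
          linarith
        have hwa_slice : ∫ x in Set.Ioi (0:ℝ), wa τ (x, ξ)
            = ξ.1 * ∫ x in Set.Ioi (0:ℝ), wax τ (x, ξ) := by
          rw [← MeasureTheory.integral_const_mul]
        have hwξ_slice : ∫ x in Set.Ioi (0:ℝ), wξ τ (x, ξ)
            = ξ.1 * ∫ x in Set.Ioi (0:ℝ), w0 τ (x, ξ) := by
          rw [← MeasureTheory.integral_const_mul]
        rw [hwa_slice, hwξ_slice, hIBP]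
        have hterm : 0 ≤ ξ.1 * (f τ 0 ξ)^2 := by
          by_cases hf0 : f τ 0 ξ = 0
          · rw [hf0]; simp
          · have := (hband τ 0 ξ hf0).1
            nlinarith [sq_nonneg (f τ 0 ξ)]
        nlinarith [hterm]
      have hL : Integrable (fun ξ : ℝ × ℝ × ℝ => ∫ x in Set.Ioi (0:ℝ), wa τ (x, ξ)) volume :=
        hai.integral_prod_right
      have hR : Integrable
          (fun ξ : ℝ × ℝ × ℝ => -(β * ∫ x in Set.Ioi (0:ℝ), wξ τ (x, ξ))) volume :=
        ((hξi.integral_prod_right).const_mul β).neg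
      have hmono := integral_mono_ae hL hR haeξ
      rw [hswap]
      refine le_trans hmono ?_
      rw [integral_neg, MeasureTheory.integral_const_mul, ← hswapξ]
      have hge : (R₁/2) * ∫ p, w0 τ p ∂μ ≤ ∫ p, wξ τ p ∂μ := by
        have hpt : ∀ p, (R₁/2) * w0 τ p ≤ wξ τ p := by
          intro p
          by_cases hf0 : f τ p.1 p.2 = 0
          · simp only [hw0def, hwξdef]; simp [hf0]
          · have hb1 := (hband τ p.1 p.2 hf0).1
            simp only [hw0def, hwξdef]
            exact mul_le_mul_of_nonneg_right hb1 (by positivity)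
        calc (R₁/2) * ∫ p, w0 τ p ∂μ = ∫ p, (R₁/2) * w0 τ p ∂μ :=
              (integral_const_mul _ _).symm
          _ ≤ ∫ p, wξ τ p ∂μ := integral_mono (h0i.const_mul _) hξi hpt
      nlinarith [hge]
    have hIc : -((β * R₁ / 2 - γ) * ∫ p, w0 τ p ∂μ) ≤ ∫ p, wc τ p ∂μ := by
      have hpt : ∀ᵐ p ∂μ, -(β * R₁ / 2 - γ) * w0 τ p ≤ wc τ p := by
        filter_upwards [hxpos] with p hp
        by_cases hf0 : f τ p.1 p.2 = 0
        · simp only [hw0def, hwcdef]; simp [hf0]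
        · obtain ⟨hb1, hb2⟩ := hband τ p.1 p.2 hf0
          simp only [hw0def, hwcdef]
          have habs : |(p.2.1 - u) / θ * E τ p.1| ≤ β * R₁ / 2 - γ := by
            have h := hEb τ hτI p.1 hp.le
            rw [abs_mul, abs_div, abs_of_pos hθ,
              abs_of_pos (by linarith : (0:ℝ) < p.2.1 - u)]
            have h1 : p.2.1 - u ≤ 2*R₂ + |u| := by
              have h1' : |u| = -u := abs_of_neg hu
              linarith
            calc (p.2.1 - u)/θ * |E τ p.1| ≤ (2*R₂+|u|)/θ * |E τ p.1| :=
                  mul_le_mul_of_nonneg_right ((div_le_div_iff_of_pos_right hθ).mpr h1) (abs_nonneg _)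
              _ = |E τ p.1| * (2*R₂+|u|) / θ := by ring
              _ ≤ β * R₁ / 2 - γ := h
          have hGe : 0 ≤ Real.exp (β * p.1) * (f τ p.1 p.2)^2 := by positivity
          have h4 : -(β * R₁ / 2 - γ) ≤ (p.2.1 - u) / θ * E τ p.1 := by
            have h5 := neg_abs_le ((p.2.1 - u) / θ * E τ p.1)
            linarith
          nlinarith
      calc -((β * R₁ / 2 - γ) * ∫ p, w0 τ p ∂μ)
            = ∫ p, -(β * R₁ / 2 - γ) * w0 τ p ∂μ := by
            rw [MeasureTheory.integral_const_mul]; ring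
        _ ≤ ∫ p, wc τ p ∂μ := integral_mono_ae (h0i.const_mul _) hci hpt
    have hnn : 0 ≤ ∫ p, w0 τ p ∂μ :=
      integral_nonneg fun p => by simp only [hw0def]; positivity
    rw [hsplit, hIb]
    nlinarith [hIa, hIc, hnn]
  -- joint continuity in (p, τ)
  have hmapj : Continuous (fun q : (ℝ × (ℝ × ℝ × ℝ)) × ℝ =>
      ((q.2, q.1.1, q.1.2) : ℝ × ℝ × (ℝ × ℝ × ℝ))) :=
    continuous_snd.prodMk ((continuous_fst.comp continuous_fst).prodMk
      (continuous_snd.comp continuous_fst))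
  have hwtj : Continuous (fun q : (ℝ × (ℝ × ℝ × ℝ)) × ℝ => wt q.2 q.1) :=
    ((continuous_const.mul (continuous_fst.comp continuous_fst)).rexp).mul
      ((continuous_const.mul (hFc.comp hmapj)).mul ((hdc et).comp hmapj))
  have hw0j : Continuous (fun q : (ℝ × (ℝ × ℝ × ℝ)) × ℝ => w0 q.2 q.1) :=
    ((continuous_const.mul (continuous_fst.comp continuous_fst)).rexp).mul
      ((hFc.comp hmapj).pow 2)
  -- product integrability over time slabs
  have hprodInt : ∀ t ∈ Set.Icc (0:ℝ) T, ∀ (w : ℝ → ℝ × (ℝ × ℝ × ℝ) → ℝ),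
      Continuous (fun q : (ℝ × (ℝ × ℝ × ℝ)) × ℝ => w q.2 q.1) →
      (∀ (τ : ℝ) (p : ℝ × (ℝ × ℝ × ℝ)), |w τ p| ≤ G τ p) →
      Integrable (fun q : (ℝ × (ℝ × ℝ × ℝ)) × ℝ => w q.2 q.1)
        (μ.prod (volume.restrict (Set.Ioc 0 t))) := by
    intro t ht w hwj hwdom
    constructor
    · exact hwj.aestronglyMeasurable
    · rw [hasFiniteIntegral_iff_norm]
      have hmeas : AEMeasurable (fun q : (ℝ × (ℝ × ℝ × ℝ)) × ℝ => ENNReal.ofReal ‖w q.2 q.1‖)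
          (μ.prod (volume.restrict (Set.Ioc 0 t))) :=
        (hwj.norm.measurable.ennreal_ofReal).aemeasurable
      rw [MeasureTheory.lintegral_prod_symm _ hmeas]
      calc (∫⁻ τ in Set.Ioc (0:ℝ) t, ∫⁻ p, ENNReal.ofReal ‖w τ p‖ ∂μ)
          ≤ ∫⁻ _ in Set.Ioc (0:ℝ) t, ENNReal.ofReal B := by
            refine lintegral_mono_ae ?_
            filter_upwards [ae_restrict_mem measurableSet_Ioc] with τ hτ
            have hτI : τ ∈ Set.Icc (0:ℝ) T := ⟨hτ.1.le, hτ.2.trans ht.2⟩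
            calc ∫⁻ p, ENNReal.ofReal ‖w τ p‖ ∂μ
                ≤ ∫⁻ p, ENNReal.ofReal (G τ p) ∂μ := by
                  refine lintegral_mono fun p => ENNReal.ofReal_le_ofReal ?_
                  rw [Real.norm_eq_abs]
                  exact hwdom τ p
              _ ≤ ENNReal.ofReal B := hG_lint τ hτI
        _ = ENNReal.ofReal B * volume (Set.Ioc (0:ℝ) t) := by
            rw [MeasureTheory.lintegral_const, Measure.restrict_apply_univ]
        _ < ⊤ := ENNReal.mul_lt_top ENNReal.ofReal_lt_top measure_Ioc_lt_top
  have hWTi : ∀ t ∈ Set.Icc (0:ℝ) T, Integrable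
      (fun q : (ℝ × (ℝ × ℝ × ℝ)) × ℝ => wt q.2 q.1)
      (μ.prod (volume.restrict (Set.Ioc 0 t))) := by
    intro t ht
    refine hprodInt t ht wt hwtj fun τ p => ?_
    simp only [hwtdef, hGdef, hDn]
    exact bnd2 _ _ _ _ _ (Real.exp_pos _) (abs_nonneg _) (hdb et hnet τ p.1 p.2)
  have hW0i' : ∀ t ∈ Set.Icc (0:ℝ) T, Integrable
      (fun q : (ℝ × (ℝ × ℝ × ℝ)) × ℝ => w0 q.2 q.1)
      (μ.prod (volume.restrict (Set.Ioc 0 t))) := by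
    intro t ht
    refine hprodInt t ht w0 hw0j fun τ p => ?_
    simp only [hw0def, hGdef, hDn]
    exact bnd1 _ _ _ _ (Real.exp_pos _) (abs_nonneg _) (norm_nonneg _)
  -- the key identity
  have hkey : ∀ t ∈ Set.Icc (0:ℝ) T,
      (∫ p, w0 t p ∂μ) = (∫ p, w0 0 p ∂μ)
        + ∫ τ in Set.Ioc (0:ℝ) t, (∫ p, wt τ p ∂μ) := by
    intro t ht
    have hFTCt : ∀ p : ℝ × (ℝ × ℝ × ℝ), w0 t p - w0 0 p = ∫ τ in Set.Ioc (0:ℝ) t, wt τ p := by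
      intro p
      have hder : ∀ τ : ℝ, HasDerivAt (fun τ => w0 τ p) (wt τ p) τ := by
        intro τ
        have h6 : HasDerivAt (fun τ => (f τ p.1 p.2)^2)
            (2 * f τ p.1 p.2 * dt τ p.1 p.2) τ := by
          simpa using (hdt τ p.1 p.2).fun_pow 2
        have h7 := h6.const_mul (Real.exp (β * p.1))
        simp only [hw0def, hwtdef]
        exact h7
      have hm2 : Continuous fun τ : ℝ => ((τ, p.1, p.2) : ℝ × ℝ × (ℝ × ℝ × ℝ)) :=
        continuous_id.prodMk continuous_const
      have hcont : Continuous fun τ => wt τ p := by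
        simp only [hwtdef]
        exact continuous_const.mul
          ((continuous_const.mul (hFc.comp hm2)).mul ((hdc et).comp hm2))
      have hFTC := intervalIntegral.integral_eq_sub_of_hasDerivAt
        (f := fun τ => w0 τ p) (fun τ _ => hder τ) (hcont.intervalIntegrable 0 t)
      rw [intervalIntegral.integral_of_le ht.1] at hFTC
      linarith
    have hsub := integral_sub (hw0i t ht) (hw0i 0 ⟨le_refl 0, hT.le⟩)
    have hswapped := MeasureTheory.integral_integral_swap
      (f := fun (p : ℝ × (ℝ × ℝ × ℝ)) (τ : ℝ) => wt τ p) (hWTi t ht)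
    have hEQ : ∫ p, (w0 t p - w0 0 p) ∂μ
        = ∫ τ in Set.Ioc (0:ℝ) t, (∫ p, wt τ p ∂μ) := by
      rw [← hswapped]
      exact integral_congr_ae (Eventually.of_forall fun p => hFTCt p)
    rw [hsub] at hEQ
    linarith
  have hDpint : IntegrableOn (fun τ => ∫ p, wt τ p ∂μ) (Set.Ioc (0:ℝ) T) volume :=
    (hWTi T ⟨hT.le, le_refl T⟩).integral_prod_right
  have hIpint : IntegrableOn (fun τ => ∫ p, w0 τ p ∂μ) (Set.Ioc (0:ℝ) T) volume :=
    (hW0i' T ⟨hT.le, le_refl T⟩).integral_prod_right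
  have hIpcont : ContinuousOn (fun s => ∫ p, w0 s p ∂μ) (Set.Icc 0 T) := by
    have h1 : ContinuousOn (fun s => (∫ p, w0 0 p ∂μ)
        + ∫ τ in Set.Ioc (0:ℝ) s, (∫ p, wt τ p ∂μ)) (Set.Icc 0 T) :=
      continuousOn_const.add (intervalIntegral.continuousOn_primitive
        ((integrableOn_Icc_iff_integrableOn_Ioc (f := fun τ => ∫ p, wt τ p ∂μ)).mpr hDpint))
    exact h1.congr fun s hs => hkey s hs
  have hIineq : ∀ t ∈ Set.Icc (0:ℝ) T,
      (fun s => ∫ p, w0 s p ∂μ) 0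
        + γ * ∫ τ in (0:ℝ)..t, (fun s => ∫ p, w0 s p ∂μ) τ
        ≤ (fun s => ∫ p, w0 s p ∂μ) t := by
    intro t ht
    simp only
    rw [hkey t ht]
    have haeT : ∀ᵐ τ ∂(volume.restrict (Set.Ioc (0:ℝ) t)),
        γ * (∫ p, w0 τ p ∂μ) ≤ ∫ p, wt τ p ∂μ := by
      have hTae : ∀ᵐ τ : ℝ, τ ≠ T := by
        rw [ae_iff]
        have hst : {τ : ℝ | ¬τ ≠ T} = {T} := by ext τ; simp
        rw [hst]
        exact Real.volume_singleton
      refine (ae_restrict_iff' measurableSet_Ioc).2 ?_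
      filter_upwards [hTae] with τ hτT hτmem
      exact hslice τ ⟨hτmem.1, lt_of_le_of_ne (hτmem.2.trans ht.2) hτT⟩
    have hmono2 := integral_mono_ae
      ((hIpint.mono_set (Set.Ioc_subset_Ioc_right ht.2)).const_mul γ)
      (hDpint.mono_set (Set.Ioc_subset_Ioc_right ht.2)) haeT
    rw [MeasureTheory.integral_const_mul] at hmono2
    rw [intervalIntegral.integral_of_le ht.1]
    linarith
  have hgr := aux_gronwall hγ hT hIpcont hIineq
  intro t ht
  have h1 := hgr t ht
  have hrepr : ∀ s, Integrable (w0 s) μ →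
      (∫ x in Set.Ioi (0:ℝ), ∫ ξ : ℝ × ℝ × ℝ, Real.exp (β*x) * (f s x ξ)^2)
        = ∫ p, w0 s p ∂μ := by
    intro s hsI
    exact (MeasureTheory.integral_prod _ hsI).symm
  rw [hrepr t (hw0i t ht), hrepr 0 (hw0i 0 ⟨le_refl 0, hT.le⟩)]
  exact h1
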